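/- Let K be a field extension of a subfield k', and let (c_n)_{n ∈ ℤ} be a doubly-infinite sequence in K satisfying a linear recurrence c_n = r_1 c_{n−1} + ⋯ + r_M c_{n−M} of minimal order M for all n ∈ ℤ, with r_1, …, r_M ∈ K and r_M ≠ 0. If c_n ∈ k' for every n ≥ n_0, then r_1, …, r_M ∈ k' and c_n ∈ k' for every n ∈ ℤ. -/

import Mathlib

theorem recurrence_coeffs_in_subfield
    (K : Type*) [Field K] (k' : Subfield K)
    (M : ℕ) (hM : 0 < M) (r : ℕ → K) (hrM : r M ≠ 0)
    (c : ℤ → K)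
    (hrec : ∀ n : ℤ, c n = ∑ i ∈ Finset.range M, r (i + 1) * c (n - (i + 1)))
    (hmin : ∀ n : ℤ, (Matrix.of fun i j : Fin M => c (n + i + j)).det ≠ 0)
    (n₀ : ℤ) (hc : ∀ n : ℤ, n₀ ≤ n → c n ∈ k') :
    (∀ i ∈ Finset.Icc 1 M, r i ∈ k') ∧ ∀ n : ℤ, c n ∈ k' := by
  have hent : ∀ i j : Fin M, c (n₀ + (i : ℤ) + (j : ℤ)) ∈ k' := by
    intro i j
    apply hc
    have hi : (0 : ℤ) ≤ (i : ℤ) := Int.natCast_nonneg _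
    have hj : (0 : ℤ) ≤ (j : ℤ) := Int.natCast_nonneg _
    omega
  set f := k'.subtype with hf
  set A' : Matrix (Fin M) (Fin M) k' :=
    Matrix.of (fun i j => (⟨c (n₀ + i + j), hent i j⟩ : k')) with hA'
  set A : Matrix (Fin M) (Fin M) K :=
    Matrix.of (fun i j : Fin M => c (n₀ + i + j)) with hA
  have hAmap : A'.map f = A := by ext i j; rfl
  have hdet : A.det ≠ 0 := hmin n₀
  have hd : f A'.det = A.det := by
    rw [RingHom.map_det, RingHom.mapMatrix_apply, hAmap]
  have hdet' : A'.det ≠ 0 := by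
    intro h
    apply hdet
    rw [← hd, h, map_zero]
  have hbmem : ∀ j : Fin M, c (n₀ + (M : ℤ) + (j : ℤ)) ∈ k' := by
    intro j
    apply hc
    have hj : (0 : ℤ) ≤ (j : ℤ) := Int.natCast_nonneg _
    omega
  set b' : Fin M → k' := fun j => ⟨c (n₀ + (M : ℤ) + (j : ℤ)), hbmem j⟩ with hb'
  set x' : Fin M → k' := (A'⁻¹).mulVec b' with hx'
  have hu' : IsUnit A'.det := isUnit_iff_ne_zero.mpr hdet'
  have hux' : A'.mulVec x' = b' := by
    rw [hx', Matrix.mulVec_mulVec, Matrix.mul_nonsing_inv _ hu', Matrix.one_mulVec]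
  -- the "true" solution over K
  have key : A.mulVec (fun i : Fin M => r (M - (i : ℕ))) = fun j : Fin M => c (n₀ + (M : ℤ) + (j : ℤ)) := by
    funext j
    show ∑ i : Fin M, A j i * r (M - (i : ℕ)) = c (n₀ + (M : ℤ) + (j : ℤ))
    rw [hrec (n₀ + (M : ℤ) + (j : ℤ))]
    rw [← Finset.sum_range_reflect]
    rw [show (∑ i : Fin M, A j i * r (M - (i : ℕ)))
        = ∑ i ∈ Finset.range M, c (n₀ + (j : ℤ) + (i : ℕ)) * r (M - i) from
      Fin.sum_univ_eq_sum_range (fun i : ℕ => c (n₀ + (j : ℤ) + (i : ℕ)) * r (M - i)) M]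
    apply Finset.sum_congr rfl
    intro i hi
    rw [Finset.mem_range] at hi
    have h1 : M - 1 - i + 1 = M - i := by omega
    have h2 : n₀ + (M : ℤ) + (j : ℤ) - ((M - 1 - i : ℕ) + 1 : ℕ) = n₀ + (j : ℤ) + (i : ℕ) := by
      omega
    rw [h1]  -- may not apply directly due to cast positions
    rw [show ((M - 1 - i : ℕ) : ℤ) + 1 = ((M - i : ℕ) : ℤ) by omega]
    rw [show n₀ + (M : ℤ) + (j : ℤ) - ((M - i : ℕ) : ℤ) = n₀ + (j : ℤ) + (i : ℕ) by omega]
    ring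
  -- map the subfield solution
  have hmap : A.mulVec (fun i => ((x' i : K))) = fun j : Fin M => c (n₀ + (M : ℤ) + (j : ℤ)) := by
    funext j
    show ∑ i : Fin M, A j i * (x' i : K) = _
    have hstep : ∑ i : Fin M, A j i * (x' i : K) = ((∑ i : Fin M, A' j i * x' i : k') : K) := by
      rw [AddSubmonoidClass.coe_finset_sum]
      refine Finset.sum_congr rfl fun i _ => ?_
      push_cast
      rfl
    rw [hstep]
    have hb := congrFun hux' j
    change ∑ i, A' j i * x' i = b' j at hb
    rw [hb]
  have hu : IsUnit A.det := isUnit_iff_ne_zero.mpr hdet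
  have hcanc : ∀ v : Fin M → K, A⁻¹.mulVec (A.mulVec v) = v := by
    intro v
    rw [Matrix.mulVec_mulVec, Matrix.nonsing_inv_mul A hu, Matrix.one_mulVec]
  have heq : (fun i : Fin M => ((x' i : K))) = fun i : Fin M => r (M - (i : ℕ)) := by
    have h1 := hcanc (fun i => ((x' i : K)))
    have h2 := hcanc (fun i : Fin M => r (M - (i : ℕ)))
    rw [hmap] at h1
    rw [key] at h2
    rw [← h1, ← h2]
  have hr : ∀ i : ℕ, 1 ≤ i → i ≤ M → r i ∈ k' := by
    intro i h1 h2
    have hj : M - i < M := by omega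
    have h := congrFun heq ⟨M - i, hj⟩
    have hMi : M - (M - i) = i := by omega
    simp only [Fin.val_mk] at h  -- maybe not needed
    rw [hMi] at h
    exact h ▸ (x' ⟨M - i, hj⟩).2
  have hrMmem : r M ∈ k' := hr M hM le_rfl
  -- backward induction
  have hall : ∀ k : ℕ, ∀ n : ℤ, n₀ - k ≤ n → c n ∈ k' := by
    intro k
    induction k with
    | zero => intro n hn; exact hc n (by omega)
    | succ k ih =>
      intro n hn
      by_cases h : n₀ - k ≤ n
      · exact ih n h
      · push_neg at h
        obtain ⟨m, hMm⟩ : ∃ m, M = m + 1 := ⟨M - 1, by omega⟩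
        have hrecn := hrec (n + (M : ℤ))
        rw [hMm, Finset.sum_range_succ] at hrecn
        have e1 : n + ((m + 1 : ℕ) : ℤ) - ((m : ℤ) + 1) = n := by omega
        rw [e1] at hrecn
        -- hrecn : c (n + ↑(m+1)) = ∑ i in range m, r (i+1) * c (n + ↑(m+1) - (↑i+1)) + r (m+1) * c n
        have hrm1 : r (m + 1) ≠ 0 := by rw [← hMm]; exact hrM
        have hgoal : c n = (r (m + 1))⁻¹ *
            (c (n + ((m + 1 : ℕ) : ℤ)) -
              ∑ i ∈ Finset.range m, r (i + 1) * c (n + ((m + 1 : ℕ) : ℤ) - ((i : ℤ) + 1))) := by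
          rw [hrecn]
          field_simp
          ring
        rw [hgoal]
        apply mul_mem (k'.inv_mem (by rw [← hMm]; exact hrMmem))
        apply sub_mem
        · exact ih _ (by omega)
        · apply sum_mem
          intro i hi
          rw [Finset.mem_range] at hi
          exact mul_mem (hr (i + 1) (by omega) (by omega)) (ih _ (by omega))
  constructor
  · intro i hi
    rw [Finset.mem_Icc] at hi
    exact hr i hi.1 hi.2
  · intro n
    rcases le_or_gt n₀ n with h | h
    · exact hc n h
    · exact hall (n₀ - n).toNat n (by omega)
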